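/- Let N ∈ ℕ, and for i ∈ {1,…,N} let ω_i ≥ 0 and M_i > 0. Let M = max_i M_i, and let U : ℝ → ℝ be concave and continuous on [0, M]. Let V > 0, B ∈ ℝ, f* ∈ ℝ. Suppose sequences z_{i,·} : ℕ → ℝ with z_{i,t} ∈ [0, M_i], e : ℕ → ℝ, and L : ℕ → ℝ with L_t ≥ 0 satisfy, for all t ∈ ℕ: L_{t+1} − L_t − V ( ∑_{i=1}^N ω_i U(z_{i,t}) − e_t ) ≤ B − V f*. Suppose moreover that for each i the Cesàro averages (1/T) ∑_{t=0}^{T−1} z_{i,t} converge to z̄_i and that (1/T) ∑_{t=0}^{T−1} e_t converges to ē. Then ∑_{i=1}^N ω_i U(z̄_i) − ē ≥ f* − B/V. -/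

import Mathlib

open Filter Finset

theorem welfare_within_B_over_V_of_optimum
    (N : ℕ) (ω M : Fin N → ℝ)
    (hω : ∀ i, 0 ≤ ω i) (hM : ∀ i, 0 < M i)
    (Mmax : ℝ) (hMmax : IsGreatest (Set.range M) Mmax)
    (U : ℝ → ℝ)
    (hconc : ConcaveOn ℝ (Set.Icc 0 Mmax) U)
    (hcont : ContinuousOn U (Set.Icc 0 Mmax))
    (V B fstar : ℝ) (hV : 0 < V)
    (z : Fin N → ℕ → ℝ) (hz : ∀ i t, z i t ∈ Set.Icc (0 : ℝ) (M i))
    (e L : ℕ → ℝ) (hL : ∀ t, 0 ≤ L t)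
    (hdrift : ∀ t, L (t + 1) - L t - V * ((∑ i, ω i * U (z i t)) - e t)
      ≤ B - V * fstar)
    (zbar : Fin N → ℝ)
    (hzbar : ∀ i, Tendsto (fun T : ℕ => (1 / (T : ℝ)) * ∑ t ∈ Finset.range T, z i t)
      atTop (nhds (zbar i)))
    (ebar : ℝ)
    (hebar : Tendsto (fun T : ℕ => (1 / (T : ℝ)) * ∑ t ∈ Finset.range T, e t)
      atTop (nhds ebar)) :
    (∑ i, ω i * U (zbar i)) - ebar ≥ fstar - B / V := by
  have hMle : ∀ i, M i ≤ Mmax := fun i => hMmax.2 ⟨i, rfl⟩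
  obtain ⟨i0, hi0⟩ := hMmax.1
  have hMmax0 : 0 < Mmax := hi0 ▸ hM i0
  have hzIcc : ∀ i t, z i t ∈ Set.Icc (0:ℝ) Mmax := fun i t =>
    ⟨(hz i t).1, le_trans (hz i t).2 (hMle i)⟩
  set avg : Fin N → ℕ → ℝ := fun i T => (1 / (T:ℝ)) * ∑ t ∈ Finset.range T, z i t with havgdef
  set avgE : ℕ → ℝ := fun T => (1 / (T:ℝ)) * ∑ t ∈ Finset.range T, e t with havgEdef
  -- averages lie in Icc 0 Mmax
  have havgmem : ∀ i T, avg i T ∈ Set.Icc (0:ℝ) Mmax := by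
    intro i T
    rcases Nat.eq_zero_or_pos T with h | h
    · subst h; simp [havgdef]; exact hMmax0.le
    · have hT : (0:ℝ) < T := by exact_mod_cast h
      constructor
      · apply mul_nonneg (by positivity)
        exact Finset.sum_nonneg fun t _ => (hz i t).1
      · have hsum : ∑ t ∈ Finset.range T, z i t ≤ (T:ℝ) * Mmax := by
          calc ∑ t ∈ Finset.range T, z i t ≤ ∑ t ∈ Finset.range T, Mmax :=
                Finset.sum_le_sum fun t _ => (hzIcc i t).2
            _ = (T:ℝ) * Mmax := by simp [mul_comm]
        calc avg i T ≤ (1 / (T:ℝ)) * ((T:ℝ) * Mmax) := by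
              apply mul_le_mul_of_nonneg_left hsum (by positivity)
          _ = Mmax := by field_simp
  -- Jensen: for T ≥ 1
  have hjensen : ∀ i, ∀ T : ℕ, 0 < T →
      (1 / (T:ℝ)) * ∑ t ∈ Finset.range T, U (z i t) ≤ U (avg i T) := by
    intro i T hT
    have hT' : (0:ℝ) < T := by exact_mod_cast hT
    have := hconc.le_map_sum (t := Finset.range T) (w := fun _ => 1 / (T:ℝ))
      (p := fun t => z i t)
      (fun t _ => by positivity)
      (by simp; field_simp)
      (fun t _ => hzIcc i t)
    simpa [havgdef, one_div, Finset.mul_sum, smul_eq_mul] using this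
  -- telescoped drift bound
  set W : ℕ → ℝ := fun t => (∑ i, ω i * U (z i t)) - e t with hWdef
  have hsumdrift : ∀ T : ℕ, L T - L 0 - V * ∑ t ∈ Finset.range T, W t
      ≤ (T:ℝ) * (B - V * fstar) := by
    intro T
    calc L T - L 0 - V * ∑ t ∈ Finset.range T, W t
        = ∑ t ∈ Finset.range T, (L (t+1) - L t - V * W t) := by
          rw [Finset.sum_sub_distrib, Finset.sum_sub_distrib, Finset.sum_range_sub,
            ← Finset.mul_sum]
          simp [hWdef, Finset.sum_sub_distrib]
      _ ≤ ∑ t ∈ Finset.range T, (B - V * fstar) :=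
          Finset.sum_le_sum fun t _ => hdrift t
      _ = (T:ℝ) * (B - V * fstar) := by simp [mul_comm]; ring
  -- key per-T inequality
  have hkey : ∀ T : ℕ, 0 < T →
      fstar - B / V - L 0 / (V * T) ≤ (∑ i, ω i * U (avg i T)) - avgE T := by
    intro T hT
    have hT' : (0:ℝ) < T := by exact_mod_cast hT
    have h1 : (1 / (T:ℝ)) * ∑ t ∈ Finset.range T, W t
        ≤ (∑ i, ω i * U (avg i T)) - avgE T := by
      have : (1 / (T:ℝ)) * ∑ t ∈ Finset.range T, W t
          = (∑ i, ω i * ((1 / (T:ℝ)) * ∑ t ∈ Finset.range T, U (z i t))) - avgE T := by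
        simp only [hWdef, havgEdef, Finset.sum_sub_distrib, mul_sub, Finset.mul_sum]
        congr 1
        rw [Finset.sum_comm]
        congr 1; ext i; congr 1; ext t; ring
      rw [this]
      have : (∑ i, ω i * ((1 / (T:ℝ)) * ∑ t ∈ Finset.range T, U (z i t)))
          ≤ ∑ i, ω i * U (avg i T) :=
        Finset.sum_le_sum fun i _ =>
          mul_le_mul_of_nonneg_left (hjensen i T hT) (hω i)
      linarith
    have h2 : fstar - B / V - L 0 / (V * T) ≤ (1 / (T:ℝ)) * ∑ t ∈ Finset.range T, W t := by
      have hd := hsumdrift T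
      have hLT := hL T
      -- V * sum W ≥ L T - L 0 - T*(B - V fstar) ≥ - L 0 + T*V*fstar - T*B
      have h3 : (T:ℝ) * V * fstar - (T:ℝ) * B - L 0 ≤ V * ∑ t ∈ Finset.range T, W t := by
        nlinarith
      rw [← sub_nonneg]
      have heq : (1 / (T:ℝ)) * ∑ t ∈ Finset.range T, W t - (fstar - B / V - L 0 / (V * T))
          = (V * ∑ t ∈ Finset.range T, W t - ((T:ℝ) * V * fstar - (T:ℝ) * B - L 0)) / (V * T) := by
        field_simp
      rw [heq]
      apply div_nonneg (by linarith) (by positivity)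
    linarith
  -- limits
  have hUcont : ∀ i, Tendsto (fun T => U (avg i T)) atTop (nhds (U (zbar i))) := by
    intro i
    have hzbari : zbar i ∈ Set.Icc (0:ℝ) Mmax :=
      isClosed_Icc.mem_of_tendsto (hzbar i) (Eventually.of_forall fun T => havgmem i T)
    have : Tendsto (fun T => avg i T) atTop (nhdsWithin (zbar i) (Set.Icc 0 Mmax)) :=
      tendsto_nhdsWithin_iff.2 ⟨hzbar i, Eventually.of_forall fun T => havgmem i T⟩
    exact (hcont (zbar i) hzbari).tendsto.comp this
  have hgl : Tendsto (fun T => (∑ i, ω i * U (avg i T)) - avgE T) atTop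
      (nhds ((∑ i, ω i * U (zbar i)) - ebar)) := by
    apply Tendsto.sub _ hebar
    exact tendsto_finset_sum _ fun i _ => (tendsto_const_nhds.mul (hUcont i))
  have hhl : Tendsto (fun T : ℕ => fstar - B / V - L 0 / (V * T)) atTop
      (nhds (fstar - B / V)) := by
    have : Tendsto (fun T : ℕ => L 0 / (V * T)) atTop (nhds 0) := by
      have h1 : Tendsto (fun T : ℕ => (V * T : ℝ)) atTop atTop :=
        (tendsto_natCast_atTop_atTop).const_mul_atTop hV
      exact tendsto_const_nhds.div_atTop h1
    simpa using (tendsto_const_nhds.sub this : Tendsto _ atTop (nhds (fstar - B / V - 0)))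
  have := le_of_tendsto_of_tendsto hhl hgl ?_
  · exact this
  · filter_upwards [eventually_gt_atTop 0] with T hT
    exact hkey T hT
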